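/- Let A ∈ ℝ^{m×m} be symmetric positive definite with condition number κ = λ_max(A)/λ_min(A), and let y ∈ ℝ^m be nonzero. Let W_k ∈ ℝ^{m×k} have orthonormal columns spanning the Krylov subspace K_k(A, y), with first column y/‖y‖₂ (so that W_kᵀ y = ‖y‖₂ e₁), and set T_k = W_kᵀ A W_k. Then 0 ≤ (yᵀ A⁻¹ y − ‖y‖₂² (T_k⁻¹)₁₁) / (yᵀ A⁻¹ y) ≤ 4 ((√κ − 1)/(√κ + 1))^{2k}, where (T_k⁻¹)₁₁ = e₁ᵀ T_k⁻¹ e₁. -/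

import Mathlib

open Matrix

/-- Euclidean norm of a vector in `ℝ^m`. -/
noncomputable def euclNorm {m : ℕ} (y : Fin m → ℝ) : ℝ :=
  Real.sqrt (y ⬝ᵥ y)

/-- The `A`-norm `‖v‖_A = √(vᵀ A v)`. -/
noncomputable def anorm {m : ℕ} (A : Matrix (Fin m) (Fin m) ℝ) (v : Fin m → ℝ) : ℝ :=
  Real.sqrt (v ⬝ᵥ A *ᵥ v)

/-- The range (column span) of a matrix `W ∈ ℝ^{m×r}`. -/
def colSpan {m r : ℕ} (W : Matrix (Fin m) (Fin r) ℝ) : Submodule ℝ (Fin m → ℝ) :=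
  Submodule.span ℝ (Set.range Wᵀ)

/-- The block Krylov subspace `K_k(A, Z)`, the span of the columns of
`Z, AZ, …, A^{k-1} Z`. -/
def krylov {m b : ℕ} (k : ℕ) (A : Matrix (Fin m) (Fin m) ℝ)
    (Z : Matrix (Fin m) (Fin b) ℝ) : Submodule ℝ (Fin m → ℝ) :=
  Submodule.span ℝ (⋃ j ∈ Finset.range k, Set.range (A ^ j * Z)ᵀ)

/-- The Krylov subspace `K_k(A, y)` for a vector `y`, the span of
`y, Ay, …, A^{k-1} y`. -/
def krylovVec {m : ℕ} (k : ℕ) (A : Matrix (Fin m) (Fin m) ℝ)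
    (y : Fin m → ℝ) : Submodule ℝ (Fin m → ℝ) :=
  Submodule.span ℝ {v | ∃ j < k, v = (A ^ j) *ᵥ y}

/-- Condition number: ratio of the largest to the smallest eigenvalue
(for a symmetric positive definite matrix, the spectrum is the set of its eigenvalues). -/
noncomputable def condNum {m : ℕ} (A : Matrix (Fin m) (Fin m) ℝ) : ℝ :=
  sSup (spectrum ℝ A) / sInf (spectrum ℝ A)

/-- `Trace(log M) = log (det M)` for a symmetric positive definite matrix `M`. -/
noncomputable def traceLog {n : ℕ} (M : Matrix (Fin n) (Fin n) ℝ) : ℝ :=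
  Real.log M.det

/-- The eigenvalues of a symmetric matrix, sorted in decreasing order:
`eigDesc M i` is the `i`-th largest eigenvalue of `M` (`i` is 0-based). -/
noncomputable def eigDesc {m : ℕ} (M : Matrix (Fin m) (Fin m) ℝ) : Fin m → ℝ :=
  open scoped Classical in
  if h : M.IsHermitian then fun i => (h.eigenvalues ∘ Tuple.sort h.eigenvalues) i.rev
  else 0



open Polynomial

lemma chebT_natDegree_le (n : ℕ) : (Polynomial.Chebyshev.T ℝ (n : ℤ)).natDegree ≤ n := by
  induction n using Nat.twoStepInduction with
  | zero => simp [Polynomial.Chebyshev.T_zero]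
  | one => simp [Polynomial.Chebyshev.T_one]
  | more n ih2 ih1 =>
    have h : ((n : ℤ) + 2) = ((n + 2 : ℕ) : ℤ) := by push_cast; ring
    rw [← h, Polynomial.Chebyshev.T_add_two]
    refine le_trans (natDegree_sub_le _ _) ?_
    have h1 : (2 * X * Polynomial.Chebyshev.T ℝ ((n : ℤ) + 1)).natDegree ≤ n + 2 := by
      refine le_trans (natDegree_mul_le) ?_
      have : ((n : ℤ) + 1) = ((n + 1 : ℕ) : ℤ) := by push_cast; ring
      rw [this]
      have := ih1
      have h2 : (2 * X : ℝ[X]).natDegree ≤ 1 := by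
        refine le_trans natDegree_mul_le ?_; simp
      omega
    have h2 : (Polynomial.Chebyshev.T ℝ (n : ℤ)).natDegree ≤ n + 2 := by omega
    simp [h1, h2]

lemma chebT_eval_half (z : ℝ) (hz : z ≠ 0) (n : ℕ) :
    (Polynomial.Chebyshev.T ℝ (n : ℤ)).eval ((z + z⁻¹) / 2) = (z ^ n + z⁻¹ ^ n) / 2 := by
  induction n using Nat.twoStepInduction with
  | zero => simp [Polynomial.Chebyshev.T_zero]
  | one => simp [Polynomial.Chebyshev.T_one]
  | more n ih2 ih1 =>
    have h : (((n + 2 : ℕ) : ℤ)) = ((n : ℤ) + 2) := by push_cast; ring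
    rw [h, Polynomial.Chebyshev.T_add_two]
    have h1 : ((n : ℤ) + 1) = (((n + 1 : ℕ)) : ℤ) := by push_cast; ring
    rw [eval_sub, eval_mul, eval_mul, eval_X, h1, ih1, ih2, eval_ofNat]
    have hz2 : z⁻¹ = 1 / z := by field_simp
    field_simp
    linear_combination (z * z⁻¹ ^ n - z⁻¹ * z⁻¹ ^ n) * mul_inv_cancel₀ hz

lemma chebT_abs_le (n : ℤ) {x : ℝ} (h1 : -1 ≤ x) (h2 : x ≤ 1) :
    |(Polynomial.Chebyshev.T ℝ n).eval x| ≤ 1 := by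
  rw [← Real.cos_arccos h1 h2, Polynomial.Chebyshev.T_real_cos]
  exact Real.abs_cos_le_one _


lemma exists_good_poly (k : ℕ) (hk : k ≠ 0) {a b : ℝ} (ha : 0 < a) (hab : a ≤ b) :
    ∃ p : Polynomial ℝ, p.natDegree ≤ k ∧ p.eval 0 = 1 ∧
      ∀ t, a ≤ t → t ≤ b →
        |p.eval t| ≤ 2 * ((Real.sqrt (b / a) - 1) / (Real.sqrt (b / a) + 1)) ^ k := by
  rcases eq_or_lt_of_le hab with rfl | hlt
  · -- a = b : use (1 - a⁻¹ X)^k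
    refine ⟨(1 - Polynomial.C a⁻¹ * X) ^ k, ?_, ?_, ?_⟩
    · refine le_trans (natDegree_pow_le) ?_
      have : (1 - Polynomial.C a⁻¹ * X : ℝ[X]).natDegree ≤ 1 := by
        refine le_trans (natDegree_sub_le _ _) ?_
        simp [natDegree_C_mul_le]
        exact le_trans natDegree_mul_le (by simp)
      calc k * (1 - Polynomial.C a⁻¹ * X : ℝ[X]).natDegree ≤ k * 1 := by
            exact Nat.mul_le_mul_left k this
        _ = k := by ring
    · simp
    · intro t h1 h2
      have ht : t = a := le_antisymm h2 h1
      subst ht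
      have : Real.sqrt (t / t) = 1 := by rw [div_self ha.ne']; simp
      rw [this]
      simp [eval_pow, inv_mul_cancel₀ ha.ne', zero_pow hk]
  · -- a < b
    set s : ℝ := Real.sqrt (b / a) with hs
    have hba : (1:ℝ) < b / a := (one_lt_div ha).mpr hlt
    have hs1 : 1 < s := by
      rw [hs]
      have := Real.lt_sqrt (x := 1) (y := b / a) (by norm_num)
      simpa using this.mpr (by simpa using hba)
    set z : ℝ := (s + 1) / (s - 1) with hzdef
    have hsne : s - 1 > 0 := by linarith
    have hz1 : 1 < z := by
      rw [hzdef, lt_div_iff₀ hsne]; linarith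
    have hz0 : z ≠ 0 := by positivity
    -- sigma0
    set σ : ℝ := (b + a) / (b - a) with hσ
    have hbma : 0 < b - a := by linarith
    have hs2 : s ^ 2 = b / a := Real.sq_sqrt (by positivity)
    have hσz : σ = (z + z⁻¹) / 2 := by
      rw [hσ, hzdef]
      rw [inv_div]
      rw [eq_div_iff ha.ne'] at hs2
      field_simp
      linear_combination (4:ℝ) * hs2
    set tv : ℝ := (Polynomial.Chebyshev.T ℝ (k : ℤ)).eval σ with htv
    have htveq : tv = (z ^ k + z⁻¹ ^ k) / 2 := by
      rw [htv, hσz, chebT_eval_half z hz0 k]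
    have hzk : 1 ≤ z ^ k := one_le_pow₀ hz1.le
    have htvpos : 0 < tv := by
      rw [htveq]; positivity
    -- ρ = z⁻¹
    have hρ : (s - 1) / (s + 1) = z⁻¹ := by
      rw [hzdef, inv_div]
    -- bound : tv⁻¹ ≤ 2 * z⁻¹ ^ k
    have hbound : tv⁻¹ ≤ 2 * z⁻¹ ^ k := by
      have h1 : z ^ k / 2 ≤ tv := by
        rw [htveq]
        have : 0 ≤ z⁻¹ ^ k := by positivity
        linarith
      have h2 : (z ^ k / 2)⁻¹ = 2 * z⁻¹ ^ k := by
        rw [inv_div]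
        rw [div_eq_mul_inv, ← inv_pow]
      rw [← h2]
      exact inv_anti₀ (by positivity) h1
    refine ⟨Polynomial.C tv⁻¹ *
      ((Polynomial.Chebyshev.T ℝ (k : ℤ)).comp (Polynomial.C σ - Polynomial.C (2 / (b - a)) * X)),
      ?_, ?_, ?_⟩
    · refine le_trans natDegree_mul_le ?_
      simp only [natDegree_C, zero_add]
      refine le_trans natDegree_comp_le ?_
      have h1 : (Polynomial.C σ - Polynomial.C (2 / (b - a)) * X : ℝ[X]).natDegree ≤ 1 := by
        refine le_trans (natDegree_sub_le _ _) ?_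
        simp
        exact le_trans natDegree_mul_le (by simp)
      calc (Polynomial.Chebyshev.T ℝ (k:ℤ)).natDegree *
            (Polynomial.C σ - Polynomial.C (2 / (b - a)) * X : ℝ[X]).natDegree
          ≤ k * 1 := Nat.mul_le_mul (chebT_natDegree_le k) h1
        _ = k := by ring
    · simp only [eval_mul, eval_C, eval_comp, eval_sub, eval_mul, eval_X, mul_zero, sub_zero]
      rw [← htv]
      exact inv_mul_cancel₀ htvpos.ne'
    · intro t h1 h2
      simp only [eval_mul, eval_C, eval_comp, eval_sub, eval_mul, eval_X]
      rw [abs_mul, abs_inv, abs_of_pos htvpos]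
      have hform : σ - 2 / (b - a) * t = (b + a - 2 * t) / (b - a) := by
        rw [hσ]; field_simp
      have harg1 : -1 ≤ σ - 2 / (b - a) * t := by
        rw [hform, le_div_iff₀ hbma]; linarith
      have harg2 : σ - 2 / (b - a) * t ≤ 1 := by
        rw [hform, div_le_one hbma]; linarith
      have := chebT_abs_le (k : ℤ) harg1 harg2
      calc tv⁻¹ * |(Polynomial.Chebyshev.T ℝ (k:ℤ)).eval (σ - 2 / (b - a) * t)|
          ≤ tv⁻¹ * 1 := by
            exact mul_le_mul_of_nonneg_left this (by positivity)
        _ = tv⁻¹ := mul_one _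
        _ ≤ 2 * z⁻¹ ^ k := hbound
        _ = 2 * ((s - 1) / (s + 1)) ^ k := by rw [hρ]

lemma pow_spectral (U : Matrix (Fin m) (Fin m) ℝ) (hU : U * Uᵀ = 1) (hU2 : Uᵀ * U = 1)
    (d : Fin m → ℝ) (n : ℕ) :
    (U * Matrix.diagonal d * Uᵀ) ^ n = U * Matrix.diagonal (fun i => d i ^ n) * Uᵀ := by
  induction n with
  | zero => simp [Matrix.diagonal_one, hU]
  | succ n ih =>
    rw [pow_succ, ih]
    have : (fun i => d i ^ (n+1)) = fun i => d i ^ n * d i := by ext i; ring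
    rw [this, ← Matrix.diagonal_mul_diagonal]
    rw [show U * Matrix.diagonal (fun i => d i ^ n) * Uᵀ * (U * Matrix.diagonal d * Uᵀ)
      = U * Matrix.diagonal (fun i => d i ^ n) * (Uᵀ * U) * Matrix.diagonal d * Uᵀ by
        noncomm_ring]
    rw [hU2, mul_one]
    noncomm_ring

lemma aeval_spectral (U : Matrix (Fin m) (Fin m) ℝ) (hU : U * Uᵀ = 1) (hU2 : Uᵀ * U = 1)
    (d : Fin m → ℝ) (p : ℝ[X]) :
    Polynomial.aeval (U * Matrix.diagonal d * Uᵀ) p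
      = U * Matrix.diagonal (fun i => p.eval (d i)) * Uᵀ := by
  induction p using Polynomial.induction_on' with
  | add p q hp hq =>
    rw [map_add, hp, hq]
    have : (fun i => (p + q).eval (d i)) = fun i => p.eval (d i) + q.eval (d i) := by
      ext i; simp
    rw [this, ← Matrix.diagonal_add]
    noncomm_ring
  | monomial n a =>
    rw [Polynomial.aeval_monomial]
    rw [pow_spectral U hU hU2]
    have : (fun i => ((Polynomial.monomial n a).eval (d i)))
        = fun i => a * d i ^ n := by ext i; simp [Polynomial.eval_monomial]
    rw [this]
    have hd : Matrix.diagonal (fun i => a * d i ^ n)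
        = a • Matrix.diagonal (fun i => d i ^ n) := by
      rw [← Matrix.diagonal_smul]; congr 1
    rw [hd]
    simp only [Matrix.mul_smul, Matrix.smul_mul]
    rw [Algebra.algebraMap_eq_smul_one]
    simp [Matrix.smul_mul]

lemma quad_diag (U : Matrix (Fin m) (Fin m) ℝ) (d : Fin m → ℝ) (v : Fin m → ℝ) :
    v ⬝ᵥ ((U * Matrix.diagonal d * Uᵀ) *ᵥ v) = ∑ i, d i * ((Uᵀ *ᵥ v) i) ^ 2 := by
  rw [← Matrix.mulVec_mulVec, ← Matrix.mulVec_mulVec]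
  rw [Matrix.dotProduct_mulVec, ← Matrix.mulVec_transpose]
  simp only [dotProduct, Matrix.mulVec_diagonal]
  exact Finset.sum_congr rfl (fun i _ => by ring)

lemma dot_mulVec_symm {A : Matrix (Fin m) (Fin m) ℝ} (hA : Aᵀ = A) (u v : Fin m → ℝ) :
    u ⬝ᵥ (A *ᵥ v) = v ⬝ᵥ (A *ᵥ u) := by
  rw [Matrix.dotProduct_mulVec, ← Matrix.mulVec_transpose, hA, dotProduct_comm]

lemma dotT {m k : ℕ} (W : Matrix (Fin m) (Fin k) ℝ) (z : Fin k → ℝ) (w : Fin m → ℝ) :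
    z ⬝ᵥ (Wᵀ *ᵥ w) = (W *ᵥ z) ⬝ᵥ w := by
  rw [Matrix.dotProduct_mulVec, Matrix.vecMul_transpose]

lemma dot3 {m : ℕ} (M A : Matrix (Fin m) (Fin m) ℝ) (hsym : Mᵀ = M) (v : Fin m → ℝ) :
    (M *ᵥ v) ⬝ᵥ (A *ᵥ (M *ᵥ v)) = v ⬝ᵥ ((M * A * M) *ᵥ v) := by
  rw [Matrix.mulVec_mulVec, ← dotT M v, hsym, Matrix.mulVec_mulVec, Matrix.mul_assoc]

lemma sum_mulVec' {m : ℕ} {ι : Type*} (s : Finset ι) (F : ι → Matrix (Fin m) (Fin m) ℝ)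
    (y : Fin m → ℝ) : (∑ i ∈ s, F i) *ᵥ y = ∑ i ∈ s, F i *ᵥ y := by
  induction s using Finset.cons_induction with
  | empty => simp
  | cons a s ha ih => simp [Finset.sum_cons, Matrix.add_mulVec, ih]

/-- CG-type error bound for the Krylov approximation of `yᵀ A⁻¹ y`. -/
theorem stmt0 {m k : ℕ} [NeZero k]
    (A : Matrix (Fin m) (Fin m) ℝ) (hA : A.PosDef)
    (y : Fin m → ℝ) (hy : y ≠ 0)
    (W : Matrix (Fin m) (Fin k) ℝ) (hW : Wᵀ * W = 1)
    (hspan : colSpan W = krylovVec k A y)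
    (hcol : Wᵀ 0 = (euclNorm y)⁻¹ • y)
    (hWy : Wᵀ *ᵥ y = euclNorm y • (Pi.single (0 : Fin k) (1 : ℝ) : Fin k → ℝ)) :
    0 ≤ (y ⬝ᵥ (A⁻¹ *ᵥ y) - euclNorm y ^ 2 * (Wᵀ * A * W)⁻¹ 0 0) / (y ⬝ᵥ (A⁻¹ *ᵥ y)) ∧
      (y ⬝ᵥ (A⁻¹ *ᵥ y) - euclNorm y ^ 2 * (Wᵀ * A * W)⁻¹ 0 0) / (y ⬝ᵥ (A⁻¹ *ᵥ y)) ≤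
        4 * ((Real.sqrt (condNum A) - 1) / (Real.sqrt (condNum A) + 1)) ^ (2 * k) := by
  classical
  rcases Nat.eq_zero_or_pos m with hm | hm
  · subst hm
    exact absurd (Subsingleton.elim y 0) hy
  have hk0 : k ≠ 0 := NeZero.ne k
  have hH : A.IsHermitian := hA.1
  have hAsymm : Aᵀ = A := by
    have h := hH
    rwa [Matrix.IsHermitian, Matrix.conjTranspose_eq_transpose_of_trivial] at h
  have hAunit : IsUnit A.det := A.isUnit_iff_isUnit_det.mp hA.isUnit
  have hAinv : A * A⁻¹ = 1 := Matrix.mul_nonsing_inv A hAunit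
  set x := A⁻¹ *ᵥ y with hx
  have hAx : A *ᵥ x = y := by
    rw [hx, Matrix.mulVec_mulVec, hAinv, Matrix.one_mulVec]
  have hxne : x ≠ 0 := by
    intro h; apply hy; rw [← hAx, h, Matrix.mulVec_zero]
  have hposd : 0 < y ⬝ᵥ x := by
    have h := hA.dotProduct_mulVec_pos hxne
    simp only [star_trivial] at h
    rw [hAx] at h
    rwa [dotProduct_comm] at h
  have hquadA : ∀ v : Fin m → ℝ, 0 ≤ v ⬝ᵥ (A *ᵥ v) := by
    intro v
    have h := hA.posSemidef.dotProduct_mulVec_nonneg v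
    simpa using h
  -- T
  set T := Wᵀ * A * W with hT
  have hTsymm : Tᵀ = T := by
    rw [hT, Matrix.transpose_mul, Matrix.transpose_mul, Matrix.transpose_transpose, hAsymm,
      Matrix.mul_assoc]
  have hWinj : ∀ z : Fin k → ℝ, W *ᵥ z = 0 → z = 0 := by
    intro z h
    have h2 : (Wᵀ * W) *ᵥ z = 0 := by
      rw [← Matrix.mulVec_mulVec, h, Matrix.mulVec_zero]
    rwa [hW, Matrix.one_mulVec] at h2
  have hTmulVec : ∀ z : Fin k → ℝ, T *ᵥ z = Wᵀ *ᵥ (A *ᵥ (W *ᵥ z)) := by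
    intro z
    rw [hT, ← Matrix.mulVec_mulVec, ← Matrix.mulVec_mulVec]
  have hTpos : T.PosDef := by
    apply Matrix.PosDef.of_dotProduct_mulVec_pos
    · rw [Matrix.IsHermitian, Matrix.conjTranspose_eq_transpose_of_trivial, hTsymm]
    · intro z hz
      have hWz : W *ᵥ z ≠ 0 := fun h => hz (hWinj z h)
      have h := hA.dotProduct_mulVec_pos hWz
      simp only [star_trivial] at h ⊢
      rw [hTmulVec z, dotT]
      exact h
  have hTunit : IsUnit T.det := T.isUnit_iff_isUnit_det.mp hTpos.isUnit
  have hTinv : T * T⁻¹ = 1 := Matrix.mul_nonsing_inv T hTunit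
  set z0 : Fin k → ℝ := T⁻¹ *ᵥ (Wᵀ *ᵥ y) with hz0
  set xk : Fin m → ℝ := W *ᵥ z0 with hxk
  -- Galerkin orthogonality
  have hgal : Wᵀ *ᵥ (y - A *ᵥ xk) = 0 := by
    have h1 : Wᵀ *ᵥ (A *ᵥ xk) = Wᵀ *ᵥ y := by
      rw [hxk, ← hTmulVec z0, hz0, Matrix.mulVec_mulVec, hTinv, Matrix.one_mulVec]
    rw [Matrix.mulVec_sub, h1, sub_self]
  -- value identity
  have hyxk : y ⬝ᵥ xk = euclNorm y ^ 2 * T⁻¹ 0 0 := by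
    rw [hxk, dotProduct_comm, ← dotT, hz0, hWy]
    simp only [Matrix.mulVec_smul, smul_dotProduct, dotProduct_smul,
      Matrix.mulVec_single, dotProduct_single, smul_eq_mul, mul_one, Pi.smul_apply]
    simp only [op_smul_eq_mul, one_mul, Matrix.col, Matrix.transpose_apply]
    ring
  set e : Fin m → ℝ := x - xk with he
  have hAe : A *ᵥ e = y - A *ᵥ xk := by
    rw [he, Matrix.mulVec_sub, hAx]
  have hcross0 : ∀ zz : Fin k → ℝ, (W *ᵥ zz) ⬝ᵥ (A *ᵥ e) = 0 := by
    intro zz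
    rw [hAe, ← dotT, hgal, dotProduct_zero]
  have hnum : e ⬝ᵥ (A *ᵥ e) = y ⬝ᵥ x - y ⬝ᵥ xk := by
    have h1 : e ⬝ᵥ (A *ᵥ e) = e ⬝ᵥ y - e ⬝ᵥ (A *ᵥ xk) := by
      rw [hAe, dotProduct_sub]
    have h2 : e ⬝ᵥ (A *ᵥ xk) = 0 := by
      rw [dot_mulVec_symm hAsymm, hxk, hcross0 z0]
    rw [h1, h2, sub_zero, he, sub_dotProduct,
      dotProduct_comm x y, dotProduct_comm xk y]
  -- minimality
  have hmin : ∀ zz : Fin k → ℝ,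
      e ⬝ᵥ (A *ᵥ e) ≤ (x - W *ᵥ zz) ⬝ᵥ (A *ᵥ (x - W *ᵥ zz)) := by
    intro zz
    set w : Fin m → ℝ := xk - W *ᵥ zz with hw
    have hd : x - W *ᵥ zz = e + w := by rw [he, hw]; abel
    have hwW : w = W *ᵥ (z0 - zz) := by rw [hw, hxk, Matrix.mulVec_sub]
    have hcw : w ⬝ᵥ (A *ᵥ e) = 0 := by rw [hwW, hcross0]
    have hcw2 : e ⬝ᵥ (A *ᵥ w) = 0 := by rw [dot_mulVec_symm hAsymm, hcw]
    rw [hd]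
    have hexp : (e + w) ⬝ᵥ (A *ᵥ (e + w))
        = e ⬝ᵥ (A *ᵥ e) + w ⬝ᵥ (A *ᵥ w) := by
      rw [Matrix.mulVec_add, dotProduct_add, add_dotProduct,
        add_dotProduct, hcw, hcw2]
      ring
    rw [hexp]
    exact le_add_of_nonneg_right (hquadA w)
  -- spectral setup
  set ev := hH.eigenvalues with hev
  set U : Matrix (Fin m) (Fin m) ℝ := (hH.eigenvectorUnitary : Matrix (Fin m) (Fin m) ℝ) with hU
  have hUU : U * Uᵀ = 1 := by
    have h := Matrix.mem_unitaryGroup_iff.mp (hH.eigenvectorUnitary).2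
    rwa [Matrix.star_eq_conjTranspose, Matrix.conjTranspose_eq_transpose_of_trivial] at h
  have hUU2 : Uᵀ * U = 1 := by
    have h := Matrix.mem_unitaryGroup_iff'.mp (hH.eigenvectorUnitary).2
    rwa [Matrix.star_eq_conjTranspose, Matrix.conjTranspose_eq_transpose_of_trivial] at h
  have hspec : A = U * Matrix.diagonal ev * Uᵀ := by
    have h := hH.spectral_theorem
    rwa [Unitary.conjStarAlgAut_apply, Matrix.star_eq_conjTranspose, Matrix.conjTranspose_eq_transpose_of_trivial,
      RCLike.ofReal_real_eq_id, Function.id_comp] at h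
  -- eigenvalue range
  have hrange : spectrum ℝ A = Set.range ev := hH.spectrum_real_eq_range_eigenvalues
  have hne : (Set.range ev).Nonempty := Set.range_nonempty_iff_nonempty.mpr ⟨⟨0, hm⟩⟩
  set a := sInf (spectrum ℝ A) with hadef
  set b := sSup (spectrum ℝ A) with hbdef
  have hamem : a ∈ Set.range ev := by
    rw [hadef, hrange]
    exact hne.csInf_mem (Set.finite_range ev)
  have hapos : 0 < a := by
    obtain ⟨i, hi⟩ := hamem
    rw [← hi]
    exact hA.eigenvalues_pos i
  have hale : ∀ i, a ≤ ev i := by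
    intro i
    rw [hadef, hrange]
    exact csInf_le (Set.finite_range ev).bddBelow ⟨i, rfl⟩
  have hble : ∀ i, ev i ≤ b := by
    intro i
    rw [hbdef, hrange]
    exact le_csSup (Set.finite_range ev).bddAbove ⟨i, rfl⟩
  have hab : a ≤ b := le_trans (hale ⟨0, hm⟩) (hble ⟨0, hm⟩)
  have hcond : condNum A = b / a := rfl
  -- the good polynomial
  obtain ⟨p, hpdeg, hp0, hpbound⟩ := exists_good_poly k hk0 hapos hab
  set ρbound : ℝ := 2 * ((Real.sqrt (b / a) - 1) / (Real.sqrt (b / a) + 1)) ^ k with hρdef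
  have hρnonneg : 0 ≤ ρbound := by
    have h1 : (1:ℝ) ≤ Real.sqrt (b / a) := by
      rw [show (1:ℝ) = Real.sqrt 1 by simp]
      exact Real.sqrt_le_sqrt ((one_le_div hapos).mpr hab)
    have h2 : (0:ℝ) ≤ (Real.sqrt (b / a) - 1) / (Real.sqrt (b / a) + 1) :=
      div_nonneg (by linarith) (by linarith)
    positivity
  -- q with p = q * X + 1
  set q : ℝ[X] := (p - 1) /ₘ X with hqdef
  have hpq : p = q * X + 1 := by
    have hmod : (p - 1) %ₘ X = 0 := by
      rw [Polynomial.modByMonic_X]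
      simp [hp0]
    have h := Polynomial.modByMonic_add_div (p - 1) X
    rw [hmod, zero_add] at h
    rw [← hqdef] at h
    linear_combination (norm := ring_nf) -h
  have hqdeg : q.natDegree < k := by
    rw [hqdef, Polynomial.natDegree_divByMonic (p - 1) (Polynomial.monic_X (R := ℝ))]
    have h1 : (p - 1).natDegree ≤ k := le_trans (Polynomial.natDegree_sub_le _ _) (by simp [hpdeg])
    have h2 : (Polynomial.X : ℝ[X]).natDegree = 1 := Polynomial.natDegree_X
    omega
  -- candidate u := -(q(A) y) ∈ colSpan W
  have humem : -((Polynomial.aeval A q) *ᵥ y) ∈ colSpan W := by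
    rw [hspan]
    apply neg_mem
    rw [Polynomial.aeval_eq_sum_range, sum_mulVec']
    apply Submodule.sum_mem
    intro i hi
    rw [Matrix.smul_mulVec]
    apply Submodule.smul_mem
    apply Submodule.subset_span
    have hik : i < k := by
      have := Finset.mem_range.mp hi
      omega
    exact ⟨i, hik, rfl⟩
  obtain ⟨zz, hzz⟩ : ∃ zz : Fin k → ℝ, -((Polynomial.aeval A q) *ᵥ y) = W *ᵥ zz := by
    rw [colSpan, show Set.range Wᵀ = Set.range W.col from rfl, ← Matrix.range_mulVecLin] at humem
    obtain ⟨zz, hzz⟩ := humem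
    exact ⟨zz, hzz.symm⟩
  -- error vector e' = p(A) x
  have hep : x - W *ᵥ zz = (Polynomial.aeval A p) *ᵥ x := by
    rw [← hzz, sub_neg_eq_add, hpq]
    rw [map_add, _root_.map_mul, _root_.map_one, Polynomial.aeval_X]
    rw [Matrix.add_mulVec, Matrix.one_mulVec]
    rw [← Matrix.mulVec_mulVec, hAx]
    abel
  -- spectral bound
  have hkey : ((Polynomial.aeval A p) *ᵥ x) ⬝ᵥ (A *ᵥ ((Polynomial.aeval A p) *ᵥ x))
      ≤ ρbound ^ 2 * (y ⬝ᵥ x) := by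
    have hsymP : (Polynomial.aeval A p)ᵀ = Polynomial.aeval A p := by
      rw [hspec, aeval_spectral U hUU hUU2]
      rw [Matrix.transpose_mul, Matrix.transpose_mul, Matrix.transpose_transpose,
        Matrix.diagonal_transpose, Matrix.mul_assoc]
    have hform : ((Polynomial.aeval A p) *ᵥ x) ⬝ᵥ (A *ᵥ ((Polynomial.aeval A p) *ᵥ x))
        = x ⬝ᵥ ((Polynomial.aeval A (X * p ^ 2)) *ᵥ x) := by
      rw [dot3 (Polynomial.aeval A p) A hsymP x]
      congr 2
      have h1 : Polynomial.aeval A p * A = Polynomial.aeval A (p * X) := by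
        rw [_root_.map_mul, Polynomial.aeval_X]
      rw [h1, ← _root_.map_mul]
      congr 1
      ring
    rw [hform]
    have hnum2 : x ⬝ᵥ ((Polynomial.aeval A (X * p ^ 2)) *ᵥ x)
        = ∑ i, (ev i * (p.eval (ev i)) ^ 2) * ((Uᵀ *ᵥ x) i) ^ 2 := by
      rw [hspec, aeval_spectral U hUU hUU2, quad_diag]
      refine Finset.sum_congr rfl (fun i _ => ?_)
      simp [Polynomial.eval_mul, Polynomial.eval_pow]
    have hden2 : y ⬝ᵥ x = ∑ i, ev i * ((Uᵀ *ᵥ x) i) ^ 2 := by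
      rw [← hAx, dotProduct_comm]
      rw [dot_mulVec_symm hAsymm]
      nth_rewrite 1 [hspec]
      rw [quad_diag]
    rw [hnum2, hden2, Finset.mul_sum]
    refine Finset.sum_le_sum (fun i _ => ?_)
    have hb1 : |p.eval (ev i)| ≤ ρbound := hpbound (ev i) (hale i) (hble i)
    have hb2 : (p.eval (ev i)) ^ 2 ≤ ρbound ^ 2 := by
      rw [← sq_abs]
      exact pow_le_pow_left₀ (abs_nonneg _) hb1 2
    have hev0 : 0 ≤ ev i := (hA.eigenvalues_pos i).le
    have hc0 : 0 ≤ ((Uᵀ *ᵥ x) i) ^ 2 := sq_nonneg _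
    nlinarith [mul_le_mul_of_nonneg_right hb2 (mul_nonneg hev0 hc0)]
  -- final assembly
  have hchain : e ⬝ᵥ (A *ᵥ e) ≤ ρbound ^ 2 * (y ⬝ᵥ x) := by
    calc e ⬝ᵥ (A *ᵥ e) ≤ (x - W *ᵥ zz) ⬝ᵥ (A *ᵥ (x - W *ᵥ zz)) := hmin zz
      _ = ((Polynomial.aeval A p) *ᵥ x) ⬝ᵥ (A *ᵥ ((Polynomial.aeval A p) *ᵥ x)) := by rw [hep]
      _ ≤ ρbound ^ 2 * (y ⬝ᵥ x) := hkey
  have hsq : ρbound ^ 2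
      = 4 * ((Real.sqrt (condNum A) - 1) / (Real.sqrt (condNum A) + 1)) ^ (2 * k) := by
    rw [hρdef, hcond, mul_pow, ← pow_mul, mul_comm k 2]
    norm_num
  have hnum' : y ⬝ᵥ x - euclNorm y ^ 2 * T⁻¹ 0 0 = e ⬝ᵥ (A *ᵥ e) := by
    rw [hnum, hyxk]
  constructor
  · apply div_nonneg _ hposd.le
    rw [hnum']
    exact hquadA e
  · rw [div_le_iff₀ hposd, hnum']
    calc e ⬝ᵥ (A *ᵥ e) ≤ ρbound ^ 2 * (y ⬝ᵥ x) := hchain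
      _ = 4 * ((Real.sqrt (condNum A) - 1) / (Real.sqrt (condNum A) + 1)) ^ (2 * k)
          * (y ⬝ᵥ x) := by rw [hsq]
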